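/- (Hopping pattern of type B1) Let m be a positive odd integer and n a positive integer divisible by m. Let I = {0, 1, …, m−1} and J = {0, 1, …, n−1}. Let e be an integer not divisible by m, c an integer coprime to m, and f₀ an arbitrary integer. Define F : I × J → I × J by F(i, j) = ((i + e) mod m, (c·i + j + f₀) mod n). Then F is a bijection of I × J satisfying: (i) for every j ∈ J, if F₂(i₁, j) = F₂(i₂, j) then i₁ = i₂; (ii) F₁(i, j) ≠ i for all (i, j) ∈ I × J; and (iii) the function Q(i, j) = (c·i² + (2f₀ − ce)·i − 2e·j) mod m is a hopping invariant, i.e. Q(F(i, j)) = Q(i, j) for all (i, j) ∈ I × J. -/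

import Mathlib

lemma stmt5_aux (m a b : ℤ) (h1 : 0 ≤ a) (h2 : a < m) (h3 : 0 ≤ b) (h4 : b < m)
    (hd : m ∣ b - a) : a = b := by
  have h := (Int.modEq_iff_dvd.mpr hd)
  rwa [Int.ModEq, Int.emod_eq_of_lt h1 h2, Int.emod_eq_of_lt h3 h4] at h

theorem stmt_5 (m n e c f₀ : ℤ) (hm : 0 < m) (hmodd : Odd m) (hn : 0 < n) (hmn : m ∣ n)
    (he : ¬ (m ∣ e)) (hc : Int.gcd c m = 1) :
    Set.BijOn (fun x : ℤ × ℤ => ((x.1 + e) % m, (c * x.1 + x.2 + f₀) % n))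
      {x : ℤ × ℤ | 0 ≤ x.1 ∧ x.1 < m ∧ 0 ≤ x.2 ∧ x.2 < n}
      {x : ℤ × ℤ | 0 ≤ x.1 ∧ x.1 < m ∧ 0 ≤ x.2 ∧ x.2 < n} ∧
    (∀ i₁ i₂ j : ℤ, 0 ≤ i₁ → i₁ < m → 0 ≤ i₂ → i₂ < m → 0 ≤ j → j < n →
      (c * i₁ + j + f₀) % n = (c * i₂ + j + f₀) % n → i₁ = i₂) ∧
    (∀ i j : ℤ, 0 ≤ i → i < m → 0 ≤ j → j < n → (i + e) % m ≠ i) ∧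
    (∀ i j : ℤ, 0 ≤ i → i < m → 0 ≤ j → j < n →
      (c * ((i + e) % m) ^ 2 + (2 * f₀ - c * e) * ((i + e) % m)
        - 2 * e * ((c * i + j + f₀) % n)) % m
      = (c * i ^ 2 + (2 * f₀ - c * e) * i - 2 * e * j) % m) := by
  have hcop : IsCoprime (m : ℤ) c := by
    rw [Int.isCoprime_iff_gcd_eq_one, Int.gcd_comm]; exact hc
  have key : ∀ i₁ i₂ : ℤ, 0 ≤ i₁ → i₁ < m → 0 ≤ i₂ → i₂ < m →
      m ∣ c * (i₂ - i₁) → i₁ = i₂ := by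
    intro i₁ i₂ h1 h2 h3 h4 hd
    exact stmt5_aux m i₁ i₂ h1 h2 h3 h4 (hcop.dvd_of_dvd_mul_left hd)
  refine ⟨⟨?_, ?_, ?_⟩, ?_, ?_, ?_⟩
  · rintro ⟨i, j⟩ ⟨h1, h2, h3, h4⟩
    exact ⟨Int.emod_nonneg _ hm.ne', Int.emod_lt_of_pos _ hm,
      Int.emod_nonneg _ hn.ne', Int.emod_lt_of_pos _ hn⟩
  · rintro ⟨i₁, j₁⟩ ⟨a1, a2, a3, a4⟩ ⟨i₂, j₂⟩ ⟨b1, b2, b3, b4⟩ hF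
    simp only [Prod.mk.injEq] at hF
    obtain ⟨hF1, hF2⟩ := hF
    have hii : i₁ = i₂ := by
      have hd := Int.ModEq.dvd (show Int.ModEq m (i₁ + e) (i₂ + e) from hF1)
      exact stmt5_aux m i₁ i₂ a1 a2 b1 b2 (by convert hd using 1; ring)
    subst hii
    have hd := Int.ModEq.dvd (show Int.ModEq n (c * i₁ + j₁ + f₀) (c * i₁ + j₂ + f₀) from hF2)
    have hjj : j₁ = j₂ := stmt5_aux n j₁ j₂ a3 a4 b3 b4 (by convert hd using 1; ring)
    simp [hjj]
  · rintro ⟨a, b⟩ ⟨h1, h2, h3, h4⟩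
    refine ⟨((a - e) % m, (b - c * ((a - e) % m) - f₀) % n), ⟨Int.emod_nonneg _ hm.ne',
      Int.emod_lt_of_pos _ hm, Int.emod_nonneg _ hn.ne', Int.emod_lt_of_pos _ hn⟩, ?_⟩
    have hA : ((a - e) % m + e) % m = a := by
      have h5 : Int.ModEq m ((a - e) % m) (a - e) := Int.emod_emod_of_dvd _ dvd_rfl
      have h6 := (h5.add_right e)
      rw [Int.ModEq] at h6
      rw [h6]
      have : a - e + e = a := by ring
      rw [this, Int.emod_eq_of_lt h1 h2]
    have hB : (c * ((a - e) % m) + (b - c * ((a - e) % m) - f₀) % n + f₀) % n = b := by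
      have h5 : Int.ModEq n ((b - c * ((a - e) % m) - f₀) % n) (b - c * ((a - e) % m) - f₀) :=
        Int.emod_emod_of_dvd _ dvd_rfl
      have h6 := (h5.add_left (c * ((a - e) % m))).add_right f₀
      rw [Int.ModEq] at h6
      rw [h6]
      have : c * ((a - e) % m) + (b - c * ((a - e) % m) - f₀) + f₀ = b := by ring
      rw [this, Int.emod_eq_of_lt h3 h4]
    simp [hA, hB]
  · intro i₁ i₂ j h1 h2 h3 h4 h5 h6 heq
    have hd := Int.ModEq.dvd (show Int.ModEq n (c * i₁ + j + f₀) (c * i₂ + j + f₀) from heq)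
    exact key _ _ h1 h2 h3 h4 (dvd_trans hmn (show n ∣ c * (i₂ - i₁) by rw [show c * (i₂ - i₁) = (c * i₂ + j + f₀) - (c * i₁ + j + f₀) by ring]; exact hd))
  · intro i j h1 h2 h3 h4 heq
    apply he
    have h7 : (i + e) % m = i % m := by rw [heq, Int.emod_eq_of_lt h1 h2]
    have hd := Int.ModEq.dvd (show Int.ModEq m (i + e) i from h7)
    have : i - (i + e) = -e := by ring
    rw [this] at hd
    exact (dvd_neg.mp hd)
  · intro i j h1 h2 h3 h4
    have h5 : Int.ModEq m ((i + e) % m) (i + e) := Int.emod_emod_of_dvd _ dvd_rfl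
    have h6 : Int.ModEq m ((c * i + j + f₀) % n) (c * i + j + f₀) :=
      Int.emod_emod_of_dvd _ hmn
    show Int.ModEq m _ _
    calc c * ((i + e) % m) ^ 2 + (2 * f₀ - c * e) * ((i + e) % m)
          - 2 * e * ((c * i + j + f₀) % n)
        ≡ c * (i + e) ^ 2 + (2 * f₀ - c * e) * (i + e)
          - 2 * e * (c * i + j + f₀) [ZMOD m] :=
          (((h5.pow 2).mul_left c).add (h5.mul_left _)).sub (h6.mul_left _)
      _ = c * i ^ 2 + (2 * f₀ - c * e) * i - 2 * e * j := by ring
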